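/- The aggregate maps w⁰ ↦ X(w⁰) and w⁰ ↦ P(w⁰) are continuous and piecewise affine on ℝ: there exist finitely many breakpoints t_1 < t_2 < ... < t_k in ℝ such that on each of the closed intervals (−∞, t_1], [t_1, t_2], ..., [t_k, ∞), both X(·) and P(·) agree with an affine function of w⁰. -/
import Mathlib


open Finset

variable {U : Type*} [Fintype U]

/-- A point `(p, p⁺, p⁻, x)` is feasible for the L-ESM subproblem:
power balance, generator bounds, and nonnegativity of grid trades. -/
def Feasible (D pbar : U → ℝ) (p pp pm x : U → ℝ) : Prop :=
  ∀ m : U, D m + x m + pm m = p m + pp m ∧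
    0 ≤ p m ∧ p m ≤ pbar m ∧ 0 ≤ pp m ∧ 0 ≤ pm m

/-- Objective of the L-ESM subproblem at base price `w0`. -/
noncomputable def Objective (c b : U → ℝ) (wplus wminus a w0 : ℝ)
    (p pp pm x : U → ℝ) : ℝ :=
  (∑ m : U, (c m / 2 * (p m) ^ 2 + b m * p m + wplus * pp m
      - wminus * pm m - w0 * x m))
    + a / 2 * ∑ m : U, (x m) ^ 2 + a / 2 * (∑ m : U, x m) ^ 2

/-- `(p, p⁺, p⁻, x)` is an optimal solution of the L-ESM subproblem. -/
noncomputable def IsOptimal (c b D pbar : U → ℝ) (wplus wminus a w0 : ℝ)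
    (p pp pm x : U → ℝ) : Prop :=
  Feasible D pbar p pp pm x ∧
    ∀ q qp qm y : U → ℝ, Feasible D pbar q qp qm y →
      Objective c b wplus wminus a w0 p pp pm x ≤
        Objective c b wplus wminus a w0 q qp qm y


namespace LESM

noncomputable def lo (DD wm aa s : ℝ) : ℝ := DD + (s - wm)/aa
noncomputable def midl (cc bb DD aa s : ℝ) : ℝ := (s - bb + aa*DD)/(cc+aa)
noncomputable def top (DD wp aa s : ℝ) : ℝ := DD + (s - wp)/aa
noncomputable def BB (cc bb wm : ℝ) : ℝ := (wm - bb)/cc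
noncomputable def AA (cc bb wp : ℝ) : ℝ := (wp - bb)/cc
noncomputable def gam (cc bb pb wp : ℝ) : ℝ := min (AA cc bb wp) pb
noncomputable def hh (cc bb DD pb wp wm aa s : ℝ) : ℝ :=
  max (min (lo DD wm aa s) (min (midl cc bb DD aa s) (gam cc bb pb wp))) (top DD wp aa s)
noncomputable def phat (cc bb DD pb wp wm aa s : ℝ) : ℝ :=
  min pb (max (BB cc bb wm) (min (hh cc bb DD pb wp wm aa s) (AA cc bb wp)))

section scalar
variable {cc bb DD pb wp wm aa : ℝ}

lemma hh_mono (ha : 0 < aa) (hca : 0 < cc) : Monotone (hh cc bb DD pb wp wm aa) := by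
  have h1 : Monotone (lo DD wm aa) := by
    intro s t hst; unfold lo; gcongr
  have h2 : Monotone (midl cc bb DD aa) := by
    intro s t hst; unfold midl
    have : 0 < cc + aa := by linarith
    gcongr
  have h3 : Monotone (top DD wp aa) := by
    intro s t hst; unfold top; gcongr
  exact (h1.min (h2.min monotone_const)).max h3

lemma hh_cont : Continuous (hh cc bb DD pb wp wm aa) := by
  unfold hh lo midl top
  fun_prop

lemma phat_cont : Continuous (phat cc bb DD pb wp wm aa) := by
  unfold phat
  exact continuous_const.min ((continuous_const.max (hh_cont.min continuous_const)))

set_option maxHeartbeats 2000000 in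
lemma kkt_core (hc : 0 < cc) (hba : bb < wm) (hwm : wm < wp) (ha : 0 < aa) (hpb : 0 ≤ pb)
    {s L M G T A B y p l : ℝ}
    (hL : aa * (L - DD) = s - wm)
    (hM : (cc+aa) * M = s - bb + aa*DD)
    (hT : aa * (T - DD) = s - wp)
    (hA : cc * A = wp - bb)
    (hB : cc * B = wm - bb)
    (hG : G = min A pb)
    (hy : y = max (min L (min M G)) T)
    (hp : p = min pb (max B (min y A)))
    (hl : l = s - aa*(y - DD)) :
    (0 ≤ p ∧ p ≤ pb) ∧ (wm ≤ l ∧ l ≤ wp) ∧ (p < y → l = wp) ∧ (y < p → l = wm) ∧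
    (∀ q, 0 ≤ q → q ≤ pb → 0 ≤ (cc*p + bb - l)*(q - p)) := by
  have hca : (0:ℝ) < cc + aa := by linarith
  have hBpos : 0 < B := by nlinarith
  have hApos : 0 < A := by nlinarith
  have hBA : B < A := by nlinarith
  have hgA : G ≤ A := hG ▸ min_le_left _ _
  have hgpb : G ≤ pb := hG ▸ min_le_right _ _
  have hgpos : 0 ≤ G := hG ▸ le_min hApos.le hpb
  have hTL : T < L := by nlinarith
  have hppb : p ≤ pb := hp ▸ min_le_left _ _
  have hppos : 0 ≤ p := hp ▸ le_min hpb (le_trans hBpos.le (le_max_left _ _))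
  rcases le_total (min L (min M G)) T with hMT | hTM
  · -- top branch : y = T
    have hyT : y = T := hy.trans (max_eq_right hMT)
    have hlam : l = wp := by rw [hl, hyT]; linarith
    have hMGT : min M G ≤ T := by
      rcases min_le_iff.mp hMT with h | h
      · linarith
      · exact h
    have hyG : G ≤ T := by
      rcases min_le_iff.mp hMGT with h | h
      · have h2 : (cc+aa) * M ≤ (cc+aa) * T := by nlinarith
        have h3 : cc * A ≤ cc * T := by nlinarith
        have : A ≤ T := le_of_mul_le_mul_left h3 hc
        linarith
      · exact h
    refine ⟨⟨hppos, hppb⟩, ⟨by rw [hlam]; linarith, by rw [hlam]⟩, fun _ => hlam, ?_, ?_⟩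
    · -- y < p impossible : p ≤ T
      intro hcon; exfalso
      have hpT : p ≤ T := by
        rcases le_total A pb with hApb | hpbA
        · have hGA : G = A := hG.trans (min_eq_left hApb)
          have hAT : A ≤ T := by rw [← hGA]; exact hyG
          calc p ≤ max B (min y A) := hp ▸ min_le_right _ _
            _ ≤ T := max_le (by linarith) (by rw [hyT]; exact le_trans (min_le_right _ _) hAT)
        · have hGpb : G = pb := hG.trans (min_eq_right hpbA)
          have : pb ≤ T := by rw [← hGpb]; exact hyG
          linarith
      rw [hyT] at hcon; linarith
    · intro q hq0 hqpb
      rcases le_total A pb with hApb | hpbA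
      · have hGA : G = A := hG.trans (min_eq_left hApb)
        have hAT : A ≤ T := by rw [← hGA]; exact hyG
        have hpA : p = A := by
          rw [hp, hyT, min_eq_right hAT, max_eq_right hBA.le, min_eq_right hApb]
        have : cc * p + bb - l = 0 := by rw [hpA, hlam]; linarith
        rw [this]; simp
      · have hGpb : G = pb := hG.trans (min_eq_right hpbA)
        have hpbT : pb ≤ T := by rw [← hGpb]; exact hyG
        have hppb2 : p = pb := by
          apply le_antisymm hppb
          rw [hp]
          apply le_min (le_refl _)
          rcases le_total T A with h1 | h1
          · rw [hyT, min_eq_left h1]; exact le_trans hpbT (le_max_right _ _)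
          · rw [hyT, min_eq_right h1]; exact le_trans hpbA (le_max_right _ _)
        have h1 : cc * p + bb - l ≤ 0 := by
          rw [hppb2, hlam]
          linarith [mul_le_mul_of_nonneg_left hpbA hc.le]
        have h2 : q - p ≤ 0 := by rw [hppb2]; linarith
        nlinarith [mul_nonneg (neg_nonneg.mpr h1) (neg_nonneg.mpr h2)]
  · -- y = min L (min M G)
    have hy2 : y = min L (min M G) := hy.trans (max_eq_left hTM)
    rcases le_total L (min M G) with hL1 | hL2
    · -- y = L
      have hyL : y = L := hy2.trans (min_eq_left hL1)
      have hLM : L ≤ M := le_trans hL1 (min_le_left _ _)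
      have hLG : L ≤ G := le_trans hL1 (min_le_right _ _)
      have hlam : l = wm := by rw [hl, hyL]; linarith
      have hLB : L ≤ B := by
        have h2 : (cc+aa) * L ≤ (cc+aa) * M := by nlinarith
        have h3 : cc * L ≤ cc * B := by nlinarith
        exact le_of_mul_le_mul_left h3 hc
      have hpm : p = min pb B := by
        rw [hp, hyL, min_eq_left (by linarith : L ≤ A), max_eq_left hLB]
      refine ⟨⟨hppos, hppb⟩, ⟨by rw [hlam], by rw [hlam]; linarith⟩, ?_, fun _ => hlam, ?_⟩
      · intro hcon; exfalso
        have : L ≤ min pb B := le_min (by linarith) hLB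
        rw [hyL] at hcon; rw [hpm] at *; linarith
      · intro q hq0 hqpb
        rcases le_total B pb with h1 | h1
        · have hpB : p = B := by rw [hpm, min_eq_right h1]
          have : cc * p + bb - l = 0 := by rw [hpB, hlam]; linarith
          rw [this]; simp
        · have hpB : p = pb := by rw [hpm, min_eq_left h1]
          have h2 : cc * p + bb - l ≤ 0 := by
            rw [hpB, hlam]
            linarith [mul_le_mul_of_nonneg_left h1 hc.le]
          have h3 : q - p ≤ 0 := by rw [hpB]; linarith
          nlinarith [mul_nonneg (neg_nonneg.mpr h2) (neg_nonneg.mpr h3)]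
    · -- y = min M G
      have hy3 : y = min M G := hy2.trans (min_eq_right hL2)
      rcases le_total M G with hMG | hGM
      · -- y = M
        have hyM : y = M := hy3.trans (min_eq_left hMG)
        have hML : M ≤ L := by rw [min_eq_left hMG] at hL2; exact hL2
        have hlam : l = cc * M + bb := by rw [hl, hyM]; nlinarith
        have hBM : B ≤ M := by
          have h2 : (cc+aa) * M ≤ (cc+aa) * L := by nlinarith
          have h3 : cc * B ≤ cc * M := by nlinarith
          exact le_of_mul_le_mul_left h3 hc
        have hMA : M ≤ A := le_trans hMG hgA
        have hMpb : M ≤ pb := le_trans hMG hgpb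
        have hpM : p = M := by
          rw [hp, hyM, min_eq_left hMA, max_eq_right hBM, min_eq_right hMpb]
        refine ⟨⟨hppos, hppb⟩, ⟨by rw [hlam]; nlinarith, by rw [hlam]; nlinarith⟩, ?_, ?_, ?_⟩
        · intro hcon; exfalso; rw [hpM, hyM] at hcon; exact lt_irrefl _ hcon
        · intro hcon; exfalso; rw [hpM, hyM] at hcon; exact lt_irrefl _ hcon
        · intro q _ _
          have : cc * p + bb - l = 0 := by rw [hpM, hlam]; ring
          rw [this]; simp
      · -- y = G
        have hyG : y = G := hy3.trans (min_eq_right hGM)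
        have hGL : G ≤ L := by rw [min_eq_right hGM] at hL2; exact hL2
        have hTG : T ≤ G := by
          have h := le_trans hTM (min_le_right L (min M G))
          rwa [min_eq_right hGM] at h
        have hlam1 : wm ≤ l := by rw [hl, hyG]; nlinarith
        have hlam2 : l ≤ wp := by rw [hl, hyG]; nlinarith
        have hlam3 : cc * G + bb ≤ l := by
          rw [hl, hyG]; nlinarith
        have hpG : p = G := by
          rcases le_total B G with h1 | h1
          · rw [hp, hyG, min_eq_left hgA, max_eq_right h1, min_eq_right hgpb]
          · have hGpb : G = pb := by
              rcases min_cases A pb with ⟨h2, h3⟩ | ⟨h2, h3⟩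
              · exfalso; rw [hG, h2] at h1; linarith
              · rw [hG, h2]
            rw [hp, hyG, min_eq_left hgA, max_eq_left h1, hGpb,
              min_eq_left (by linarith : pb ≤ B)]
        refine ⟨⟨hppos, hppb⟩, ⟨hlam1, hlam2⟩, ?_, ?_, ?_⟩
        · intro hcon; exfalso; rw [hpG, hyG] at hcon; exact lt_irrefl _ hcon
        · intro hcon; exfalso; rw [hpG, hyG] at hcon; exact lt_irrefl _ hcon
        · intro q hq0 hqpb
          rcases le_total A pb with h1 | h1
          · have hGA : G = A := hG.trans (min_eq_left h1)
            have hlwp : l = wp := by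
              apply le_antisymm hlam2
              rw [hGA] at hlam3; nlinarith
            have : cc * p + bb - l = 0 := by rw [hpG, hGA, hlwp]; linarith
            rw [this]; simp
          · have hGpb : G = pb := hG.trans (min_eq_right h1)
            have h2 : cc * p + bb - l ≤ 0 := by rw [hpG]; linarith
            have h3 : q - p ≤ 0 := by rw [hpG, hGpb]; linarith
            nlinarith [mul_nonneg (neg_nonneg.mpr h2) (neg_nonneg.mpr h3)]

/-- All the KKT facts for the scalar candidate at inner price `s`. -/
lemma kkt (hc : 0 < cc) (hba : bb < wm) (hwm : wm < wp) (ha : 0 < aa) (hpb : 0 ≤ pb)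
    (s : ℝ) :
    (0 ≤ phat cc bb DD pb wp wm aa s ∧ phat cc bb DD pb wp wm aa s ≤ pb) ∧
    (wm ≤ s - aa*(hh cc bb DD pb wp wm aa s - DD) ∧ s - aa*(hh cc bb DD pb wp wm aa s - DD) ≤ wp) ∧
    (phat cc bb DD pb wp wm aa s < hh cc bb DD pb wp wm aa s → s - aa*(hh cc bb DD pb wp wm aa s - DD) = wp) ∧
    (hh cc bb DD pb wp wm aa s < phat cc bb DD pb wp wm aa s → s - aa*(hh cc bb DD pb wp wm aa s - DD) = wm) ∧
    (∀ q : ℝ, 0 ≤ q → q ≤ pb →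
      0 ≤ (cc * phat cc bb DD pb wp wm aa s + bb - (s - aa*(hh cc bb DD pb wp wm aa s - DD)))
        * (q - phat cc bb DD pb wp wm aa s)) := by
  have hc' : cc ≠ 0 := ne_of_gt hc
  have ha' : aa ≠ 0 := ne_of_gt ha
  have hca' : cc + aa ≠ 0 := by positivity
  exact kkt_core hc hba hwm ha hpb
    (by unfold lo; field_simp; ring)
    (by unfold midl; field_simp)
    (by unfold top; field_simp; ring)
    (by unfold AA; field_simp)
    (by unfold BB; field_simp)
    rfl rfl rfl rfl

end scalar

noncomputable def rootSet (cc bb DD pb wp wm aa : ℝ) : Finset ℝ :=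
  {wm + aa*(BB cc bb wm - DD), wm + aa*(AA cc bb wp - DD),
   wm + aa*(gam cc bb pb wp - DD), wm + aa*(pb - DD),
   (cc+aa)*(BB cc bb wm) + bb - aa*DD, (cc+aa)*(AA cc bb wp) + bb - aa*DD,
   (cc+aa)*(gam cc bb pb wp) + bb - aa*DD, (cc+aa)*pb + bb - aa*DD,
   wp + aa*(BB cc bb wm - DD), wp + aa*(AA cc bb wp - DD),
   wp + aa*(gam cc bb pb wp - DD), wp + aa*(pb - DD)}

def SameSide (R : Set ℝ) (r : ℝ) : Prop := ∀ s ∈ R, ∀ s' ∈ R, 0 ≤ (s - r)*(s' - r)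

lemma dicho {R : Set ℝ} {f g : ℝ → ℝ} (δ r : ℝ) (hd : ∀ s, f s - g s = δ*(s - r))
    (hr : SameSide R r) :
    (∀ s ∈ R, f s ≤ g s) ∨ (∀ s ∈ R, g s ≤ f s) := by
  by_cases h : ∀ s ∈ R, f s ≤ g s
  · exact Or.inl h
  · right
    push_neg at h
    obtain ⟨s0, hs0, hgf⟩ := h
    intro s hs
    have h1 := hr s hs s0 hs0
    have h2 := hd s
    have h3 := hd s0
    have h4 : 0 ≤ (f s - g s) * (f s0 - g s0) := by
      rw [h2, h3]
      nlinarith [mul_nonneg (sq_nonneg δ) h1]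
    nlinarith [h4]

section scalar
variable {cc bb DD pb wp wm aa : ℝ}

set_option maxHeartbeats 2000000 in
lemma aff_pieces (hc : 0 < cc) (hba : bb < wm) (hwm : wm < wp) (ha : 0 < aa) (hpb : 0 ≤ pb)
    {R : Set ℝ} (hR : ∀ r ∈ rootSet cc bb DD pb wp wm aa, SameSide R r) :
    ∃ α β α' β' : ℝ, 0 ≤ α ∧ (∀ s ∈ R, hh cc bb DD pb wp wm aa s = α*s + β) ∧
      (∀ s ∈ R, phat cc bb DD pb wp wm aa s = α'*s + β') := by
  have hca : (0:ℝ) < cc + aa := by linarith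
  have hc' : cc ≠ 0 := ne_of_gt hc
  have ha' : aa ≠ 0 := ne_of_gt ha
  have hca' : cc + aa ≠ 0 := ne_of_gt hca
  set A := AA cc bb wp with hA
  set B := BB cc bb wm with hB
  set G := gam cc bb pb wp with hG
  have hBA : B < A := by
    rw [hA, hB]; unfold AA BB; rw [div_lt_div_iff₀ hc hc]; nlinarith
  have hgA : G ≤ A := min_le_left _ _
  have hgpb : G ≤ pb := min_le_right _ _
  -- dichotomies from roots
  have dLM : (∀ s ∈ R, lo DD wm aa s ≤ midl cc bb DD aa s) ∨
      (∀ s ∈ R, midl cc bb DD aa s ≤ lo DD wm aa s) := by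
    apply dicho (cc/(aa*(cc+aa))) (wm + aa*(B - DD)) ?_ (hR _ (by simp [rootSet, hB]))
    intro s; unfold lo midl; rw [hB]; unfold BB; field_simp; ring
  have dMG : (∀ s ∈ R, midl cc bb DD aa s ≤ G) ∨ (∀ s ∈ R, G ≤ midl cc bb DD aa s) := by
    apply dicho (R := R) (f := midl cc bb DD aa) (g := fun _ => G)
      (1/(cc+aa)) ((cc+aa)*G + bb - aa*DD) ?_ (hR _ (by simp [rootSet, hG]))
    intro s; unfold midl; field_simp; ring
  have dLG : (∀ s ∈ R, lo DD wm aa s ≤ G) ∨ (∀ s ∈ R, G ≤ lo DD wm aa s) := by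
    apply dicho (R := R) (f := lo DD wm aa) (g := fun _ => G)
      (1/aa) (wm + aa*(G - DD)) ?_ (hR _ (by simp [rootSet, hG]))
    intro s; unfold lo; field_simp; try ring
  have dMT : (∀ s ∈ R, midl cc bb DD aa s ≤ top DD wp aa s) ∨
      (∀ s ∈ R, top DD wp aa s ≤ midl cc bb DD aa s) := by
    apply dicho (-(cc/(aa*(cc+aa)))) (wp + aa*(A - DD)) ?_ (hR _ (by simp [rootSet, hA]))
    intro s; unfold midl top; rw [hA]; unfold AA; field_simp; ring
  have dGT : (∀ s ∈ R, G ≤ top DD wp aa s) ∨ (∀ s ∈ R, top DD wp aa s ≤ G) := by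
    apply dicho (R := R) (f := fun _ => G) (g := top DD wp aa)
      (-(1/aa)) (wp + aa*(G - DD)) ?_ (hR _ (by simp [rootSet, hG]))
    intro s; unfold top; field_simp; ring
  have hTL : ∀ s, top DD wp aa s ≤ lo DD wm aa s := by
    intro s; unfold lo top
    have : (s - wp)/aa ≤ (s - wm)/aa := by gcongr <;> linarith
    linarith
  -- affine witnesses for the base functions
  have wlo : ∀ s, lo DD wm aa s = (1/aa)*s + (DD - wm/aa) := by
    intro s; unfold lo; field_simp; ring
  have wmidl : ∀ s, midl cc bb DD aa s = (1/(cc+aa))*s + ((aa*DD - bb)/(cc+aa)) := by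
    intro s; unfold midl; field_simp; ring
  have wtop : ∀ s, top DD wp aa s = (1/aa)*s + (DD - wp/aa) := by
    intro s; unfold top; field_simp; ring
  have haa : (0:ℝ) ≤ 1/aa := by positivity
  have hcaa : (0:ℝ) ≤ 1/(cc+aa) := by positivity
  -- phat stage helper
  have phstage : ∀ f : ℝ → ℝ,
      (∀ s ∈ R, hh cc bb DD pb wp wm aa s = f s) →
      ((∀ s ∈ R, f s ≤ A) ∨ (∀ s ∈ R, A ≤ f s)) →
      ((∀ s ∈ R, f s ≤ B) ∨ (∀ s ∈ R, B ≤ f s)) →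
      ((∀ s ∈ R, f s ≤ pb) ∨ (∀ s ∈ R, pb ≤ f s)) →
      (∃ α β : ℝ, 0 ≤ α ∧ ∀ s ∈ R, f s = α*s + β) →
      ∃ α β α' β' : ℝ, 0 ≤ α ∧ (∀ s ∈ R, hh cc bb DD pb wp wm aa s = α*s + β) ∧
        (∀ s ∈ R, phat cc bb DD pb wp wm aa s = α'*s + β') := by
    intro f hf dA dB dpb ⟨α, β, hα, haff⟩
    have hhEq : ∀ s ∈ R, hh cc bb DD pb wp wm aa s = α*s + β := fun s hs =>
      (hf s hs).trans (haff s hs)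
    have hph : ∀ s ∈ R, phat cc bb DD pb wp wm aa s = min pb (max B (min (f s) A)) := by
      intro s hs; unfold phat; rw [hf s hs, ← hA, ← hB]
    rcases dA with dA | dA
    · rcases dB with dB | dB
      · -- f ≤ B : phat = min pb B (constant)
        refine ⟨α, β, 0, min pb B, hα, hhEq, ?_⟩
        intro s hs
        rw [hph s hs, min_eq_left (le_trans (dA s hs) ?_), max_eq_left (dB s hs)]
        · ring
        · exact le_refl A
      · rcases dpb with dpb | dpb
        · -- B ≤ f ≤ A, f ≤ pb : phat = f
          refine ⟨α, β, α, β, hα, hhEq, ?_⟩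
          intro s hs
          rw [hph s hs, min_eq_left (dA s hs), max_eq_right (dB s hs),
            min_eq_right (dpb s hs)]
          exact haff s hs
        · -- pb ≤ f : phat = pb
          refine ⟨α, β, 0, pb, hα, hhEq, ?_⟩
          intro s hs
          rw [hph s hs, min_eq_left (dA s hs),
            min_eq_left (le_trans (dpb s hs) (le_max_right B (f s)))]
          ring
    · -- A ≤ f : phat = min pb A (constant)
      refine ⟨α, β, 0, min pb A, hα, hhEq, ?_⟩
      intro s hs
      rw [hph s hs, min_eq_right (dA s hs), max_eq_right hBA.le]
      ring
  -- dichos of f vs constants for each base f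
  have dloK : ∀ K : ℝ, (wm + aa*(K - DD)) ∈ rootSet cc bb DD pb wp wm aa →
      (∀ s ∈ R, lo DD wm aa s ≤ K) ∨ (∀ s ∈ R, K ≤ lo DD wm aa s) := by
    intro K hK
    apply dicho (R := R) (f := lo DD wm aa) (g := fun _ => K) (1/aa) _ ?_ (hR _ hK)
    intro s; unfold lo; field_simp; ring
  have dmidlK : ∀ K : ℝ, ((cc+aa)*K + bb - aa*DD) ∈ rootSet cc bb DD pb wp wm aa →
      (∀ s ∈ R, midl cc bb DD aa s ≤ K) ∨ (∀ s ∈ R, K ≤ midl cc bb DD aa s) := by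
    intro K hK
    apply dicho (R := R) (f := midl cc bb DD aa) (g := fun _ => K) (1/(cc+aa)) _ ?_ (hR _ hK)
    intro s; unfold midl; field_simp; ring
  have dtopK : ∀ K : ℝ, (wp + aa*(K - DD)) ∈ rootSet cc bb DD pb wp wm aa →
      (∀ s ∈ R, top DD wp aa s ≤ K) ∨ (∀ s ∈ R, K ≤ top DD wp aa s) := by
    intro K hK
    apply dicho (R := R) (f := top DD wp aa) (g := fun _ => K) (1/aa) _ ?_ (hR _ hK)
    intro s; unfold top; field_simp; ring
  -- the case tree on the shape of hh
  rcases dMG with dMG | dMG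
  · -- min (midl, G) = midl on R
    have hmm : ∀ s ∈ R, min (midl cc bb DD aa s) G = midl cc bb DD aa s := fun s hs =>
      min_eq_left (dMG s hs)
    rcases dLM with dLM | dLM
    · -- hh = max lo top = lo
      have hf : ∀ s ∈ R, hh cc bb DD pb wp wm aa s = lo DD wm aa s := by
        intro s hs; unfold hh
        rw [← hG, hmm s hs, min_eq_left (dLM s hs), max_eq_left (hTL s)]
      exact phstage _ hf (dloK A (by simp [rootSet, hA])) (dloK B (by simp [rootSet, hB]))
        (dloK pb (by simp [rootSet])) ⟨1/aa, DD - wm/aa, haa, fun s _ => wlo s⟩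
    · -- min lo midl = midl ; hh = max midl top
      rcases dMT with dMT | dMT
      · -- hh = top
        have hf : ∀ s ∈ R, hh cc bb DD pb wp wm aa s = top DD wp aa s := by
          intro s hs; unfold hh
          rw [← hG, hmm s hs, min_eq_right (dLM s hs), max_eq_right (dMT s hs)]
        exact phstage _ hf (dtopK A (by simp [rootSet, hA])) (dtopK B (by simp [rootSet, hB]))
          (dtopK pb (by simp [rootSet])) ⟨1/aa, DD - wp/aa, haa, fun s _ => wtop s⟩
      · -- hh = midl
        have hf : ∀ s ∈ R, hh cc bb DD pb wp wm aa s = midl cc bb DD aa s := by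
          intro s hs; unfold hh
          rw [← hG, hmm s hs, min_eq_right (dLM s hs), max_eq_left (dMT s hs)]
        exact phstage _ hf (dmidlK A (by simp [rootSet, hA])) (dmidlK B (by simp [rootSet, hB]))
          (dmidlK pb (by simp [rootSet]))
          ⟨1/(cc+aa), (aa*DD - bb)/(cc+aa), hcaa, fun s _ => wmidl s⟩
  · -- min (midl, G) = G on R
    have hmm : ∀ s ∈ R, min (midl cc bb DD aa s) G = G := fun s hs =>
      min_eq_right (dMG s hs)
    rcases dLG with dLG | dLG
    · -- hh = max lo top = lo
      have hf : ∀ s ∈ R, hh cc bb DD pb wp wm aa s = lo DD wm aa s := by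
        intro s hs; unfold hh
        rw [← hG, hmm s hs, min_eq_left (dLG s hs), max_eq_left (hTL s)]
      exact phstage _ hf (dloK A (by simp [rootSet, hA])) (dloK B (by simp [rootSet, hB]))
        (dloK pb (by simp [rootSet])) ⟨1/aa, DD - wm/aa, haa, fun s _ => wlo s⟩
    · -- min lo G = G ; hh = max G top
      rcases dGT with dGT | dGT
      · -- hh = top
        have hf : ∀ s ∈ R, hh cc bb DD pb wp wm aa s = top DD wp aa s := by
          intro s hs; unfold hh
          rw [← hG, hmm s hs, min_eq_right (dLG s hs), max_eq_right (dGT s hs)]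
        exact phstage _ hf (dtopK A (by simp [rootSet, hA])) (dtopK B (by simp [rootSet, hB]))
          (dtopK pb (by simp [rootSet])) ⟨1/aa, DD - wp/aa, haa, fun s _ => wtop s⟩
      · -- hh = G (constant)
        have hf : ∀ s ∈ R, hh cc bb DD pb wp wm aa s = G := by
          intro s hs; unfold hh
          rw [← hG, hmm s hs, min_eq_right (dLG s hs), max_eq_left (dGT s hs)]
        refine phstage _ hf (Or.inl fun s _ => hgA) ?_ (Or.inl fun s _ => hgpb)
          ⟨0, G, le_refl 0, fun s _ => by ring⟩
        rcases le_total G B with h | h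
        · exact Or.inl fun s _ => h
        · exact Or.inr fun s _ => h

end scalar
end LESM

namespace LESM

set_option maxHeartbeats 1000000 in
/-- identification of the optimal solution with the explicit candidate -/
lemma star_eq (c b D pbar : U → ℝ) (wp wm a : ℝ)
    (hc : ∀ m, 0 < c m) (hpbar : ∀ m, 0 ≤ pbar m)
    (hbw : ∀ m, b m < wm) (hw : wm < wp) (ha : 0 < a)
    (w s : ℝ)
    (hws : w = s + a * ∑ m, (hh (c m) (b m) (D m) (pbar m) wp wm a s - D m))
    (p pp pm x : U → ℝ)
    (hopt : IsOptimal c b D pbar wp wm a w p pp pm x) :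
    ∀ m, p m = phat (c m) (b m) (D m) (pbar m) wp wm a s ∧
      x m = hh (c m) (b m) (D m) (pbar m) wp wm a s - D m := by
  classical
  obtain ⟨yh, hyh⟩ : ∃ f : U → ℝ, ∀ m, f m = hh (c m) (b m) (D m) (pbar m) wp wm a s :=
    ⟨_, fun _ => rfl⟩
  obtain ⟨ph, hph⟩ : ∃ f : U → ℝ, ∀ m, f m = phat (c m) (b m) (D m) (pbar m) wp wm a s :=
    ⟨_, fun _ => rfl⟩
  obtain ⟨xh, hxh⟩ : ∃ f : U → ℝ, ∀ m, f m = yh m - D m := ⟨_, fun _ => rfl⟩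
  obtain ⟨pph, hpph⟩ : ∃ f : U → ℝ, ∀ m, f m = max (yh m - ph m) 0 := ⟨_, fun _ => rfl⟩
  obtain ⟨pmh, hpmh⟩ : ∃ f : U → ℝ, ∀ m, f m = max (ph m - yh m) 0 := ⟨_, fun _ => rfl⟩
  have kk := fun m : U => kkt (cc := c m) (bb := b m) (DD := D m) (pb := pbar m)
    (wp := wp) (wm := wm) (aa := a) (hc m) (hbw m) hw ha (hpbar m) s
  -- feasibility of candidate
  have hfeas : Feasible D pbar ph pph pmh xh := by
    intro m
    obtain ⟨⟨h1, h2⟩, _, _, _, _⟩ := kk m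
    rw [← hph m] at h1 h2
    refine ⟨?_, h1, h2, by rw [hpph m]; exact le_max_right _ _,
      by rw [hpmh m]; exact le_max_right _ _⟩
    rcases le_total (ph m) (yh m) with h | h
    · rw [hpph m, hpmh m, hxh m,
        max_eq_left (by linarith : (0:ℝ) ≤ yh m - ph m),
        max_eq_right (by linarith : ph m - yh m ≤ (0:ℝ))]
      ring
    · rw [hpph m, hpmh m, hxh m,
        max_eq_right (by linarith : yh m - ph m ≤ (0:ℝ)),
        max_eq_left (by linarith : (0:ℝ) ≤ ph m - yh m)]
      ring
  obtain ⟨hfs, hmin⟩ := hopt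
  have hle := hmin ph pph pmh xh hfeas
  obtain ⟨SX, hSX⟩ : ∃ r : ℝ, r = ∑ m, xh m := ⟨_, rfl⟩
  obtain ⟨T, hT⟩ : ∃ r : ℝ, r = ∑ m, (x m - xh m) := ⟨_, rfl⟩
  have hsum0 : ∑ m, xh m = ∑ m, (hh (c m) (b m) (D m) (pbar m) wp wm a s - D m) :=
    Finset.sum_congr rfl (fun m _ => by rw [hxh m, hyh m])
  have hws' : w = s + a * SX := by rw [hws, hSX, hsum0]
  have hbal1 : ∀ m, x m - xh m = (p m - ph m) + (pp m - pph m) - (pm m - pmh m) := by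
    intro m
    have h1 := (hfs m).1
    have h2 := (hfeas m).1
    linarith
  have hlam : ∀ m, w - a*xh m - a*SX = s - a*(yh m - D m) := by
    intro m
    rw [hws', hxh m]
    ring
  obtain ⟨E, hE⟩ : ∃ E : U → ℝ, ∀ m, E m =
      c m/2*(p m - ph m)^2 + a/2*(x m - xh m)^2
      + (c m * ph m + b m - (w - a*xh m - a*SX))*(p m - ph m)
      + (wp - (w - a*xh m - a*SX))*(pp m - pph m)
      + ((w - a*xh m - a*SX) - wm)*(pm m - pmh m) := ⟨_, fun _ => rfl⟩
  have h1 : ∑ m, x m = SX + T := by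
    rw [hSX, hT, ← Finset.sum_add_distrib]
    exact Finset.sum_congr rfl (fun m _ => by ring)
  have main : ∑ m, (c m / 2 * (p m) ^ 2 + b m * p m + wp * pp m - wm * pm m - w * x m
        + a / 2 * (x m) ^ 2)
      = ∑ m, (c m / 2 * (ph m) ^ 2 + b m * ph m + wp * pph m - wm * pmh m - w * xh m
        + a / 2 * (xh m) ^ 2 + E m - a * SX * (x m - xh m)) := by
    refine Finset.sum_congr rfl (fun m _ => ?_)
    rw [hE m]
    linear_combination (-(w - a*xh m - a*SX)) * hbal1 m
  have obj1 : Objective c b wp wm a w p pp pm x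
      = ∑ m, (c m / 2 * (p m) ^ 2 + b m * p m + wp * pp m - wm * pm m - w * x m
        + a / 2 * (x m) ^ 2) + a/2*(SX+T)^2 := by
    unfold Objective
    rw [h1, Finset.sum_add_distrib, ← Finset.mul_sum]
  have obj2 : Objective c b wp wm a w ph pph pmh xh
      = ∑ m, (c m / 2 * (ph m) ^ 2 + b m * ph m + wp * pph m - wm * pmh m - w * xh m
        + a / 2 * (xh m) ^ 2) + a/2*SX^2 := by
    unfold Objective
    rw [← hSX, Finset.sum_add_distrib, ← Finset.mul_sum]
  have hkey : Objective c b wp wm a w p pp pm x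
      = Objective c b wp wm a w ph pph pmh xh + ∑ m, E m + a/2*T^2 := by
    rw [obj1, obj2, main, Finset.sum_sub_distrib, Finset.sum_add_distrib,
      ← Finset.mul_sum, ← hT]
    ring
  -- each E m dominates the quadratic part
  have hE1 : ∀ m, c m/2*(p m - ph m)^2 + a/2*(x m - xh m)^2 ≤ E m := by
    intro m
    obtain ⟨⟨hp0, hp1⟩, ⟨l1, l2⟩, F2, F3, K2⟩ := kk m
    rw [← hph m] at hp0 hp1 F2 F3
    rw [← hyh m] at F2 F3 l1 l2
    have hlm := hlam m
    have t1 : 0 ≤ (c m * ph m + b m - (w - a*xh m - a*SX))*(p m - ph m) := by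
      rw [hlm]
      have := K2 (p m) (hfs m).2.1 (hfs m).2.2.1
      rw [← hph m, ← hyh m] at this
      exact this
    have t2 : 0 ≤ (wp - (w - a*xh m - a*SX))*(pp m - pph m) := by
      rcases lt_or_ge (ph m) (yh m) with h | h
      · have : w - a*xh m - a*SX = wp := by rw [hlm]; exact F2 h
        rw [this]; simp
      · have hz : pph m = 0 := by
          rw [hpph m, max_eq_right (by linarith : yh m - ph m ≤ 0)]
        rw [hz, hlm, sub_zero]
        exact mul_nonneg (by linarith) (hfs m).2.2.2.1
    have t3 : 0 ≤ ((w - a*xh m - a*SX) - wm)*(pm m - pmh m) := by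
      rcases lt_or_ge (yh m) (ph m) with h | h
      · have : w - a*xh m - a*SX = wm := by rw [hlm]; exact F3 h
        rw [this]; simp
      · have hz : pmh m = 0 := by
          rw [hpmh m, max_eq_right (by linarith : ph m - yh m ≤ 0)]
        rw [hz, hlm, sub_zero]
        exact mul_nonneg (by linarith) (hfs m).2.2.2.2
    rw [hE m]
    linarith [t1, t2, t3]
  have hQ0 : ∀ m, 0 ≤ c m/2*(p m - ph m)^2 + a/2*(x m - xh m)^2 := by
    intro m
    have h1 : 0 ≤ c m/2*(p m - ph m)^2 :=
      mul_nonneg (by linarith [hc m]) (sq_nonneg _)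
    have h2 : 0 ≤ a/2*(x m - xh m)^2 := mul_nonneg (by linarith) (sq_nonneg _)
    linarith
  have hEsum : ∑ m, E m ≤ 0 := by nlinarith [sq_nonneg T, hle, hkey.le, hkey.ge]
  have hQsum : ∑ m, (c m/2*(p m - ph m)^2 + a/2*(x m - xh m)^2) = 0 := by
    have hle2 : ∑ m, (c m/2*(p m - ph m)^2 + a/2*(x m - xh m)^2) ≤ ∑ m, E m :=
      Finset.sum_le_sum (fun m _ => hE1 m)
    have hge : 0 ≤ ∑ m, (c m/2*(p m - ph m)^2 + a/2*(x m - xh m)^2) :=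
      Finset.sum_nonneg (fun m _ => hQ0 m)
    linarith
  have hQz := (Finset.sum_eq_zero_iff_of_nonneg (fun m _ => hQ0 m)).mp hQsum
  intro m
  have hq := hQz m (Finset.mem_univ m)
  have hcp : 0 ≤ c m/2*(p m - ph m)^2 :=
    mul_nonneg (by linarith [hc m]) (sq_nonneg _)
  have hax : 0 ≤ a/2*(x m - xh m)^2 := mul_nonneg (by linarith) (sq_nonneg _)
  have e1 : c m/2*(p m - ph m)^2 = 0 := by linarith
  have e2 : a/2*(x m - xh m)^2 = 0 := by linarith
  have hp : p m - ph m = 0 := by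
    rcases mul_eq_zero.mp e1 with h | h
    · exfalso; have := hc m; linarith
    · exact pow_eq_zero_iff (by norm_num) |>.mp h
  have hx : x m - xh m = 0 := by
    rcases mul_eq_zero.mp e2 with h | h
    · exfalso; linarith
    · exact pow_eq_zero_iff (by norm_num) |>.mp h
  refine ⟨by rw [← hph m]; linarith, by rw [← hyh m, ← hxh m]; linarith⟩
end LESM

namespace LESM

variable {U : Type*} [Fintype U]

noncomputable def chi (c b D pbar : U → ℝ) (wp wm a : ℝ) (s : ℝ) : ℝ :=
  s + a * ∑ m, (hh (c m) (b m) (D m) (pbar m) wp wm a s - D m)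

lemma chi_strictMono (c b D pbar : U → ℝ) (wp wm a : ℝ)
    (hc : ∀ m, 0 < c m) (ha : 0 < a) : StrictMono (chi c b D pbar wp wm a) := by
  intro s t hst
  unfold chi
  have hmono : ∑ m, (hh (c m) (b m) (D m) (pbar m) wp wm a s - D m)
      ≤ ∑ m, (hh (c m) (b m) (D m) (pbar m) wp wm a t - D m) :=
    Finset.sum_le_sum (fun m _ => by
      have := hh_mono (cc := c m) (bb := b m) (DD := D m) (pb := pbar m)
        (wp := wp) (wm := wm) (aa := a) ha (hc m) hst.le
      linarith)
  nlinarith [mul_le_mul_of_nonneg_left hmono ha.le]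

lemma chi_cont (c b D pbar : U → ℝ) (wp wm a : ℝ) :
    Continuous (chi c b D pbar wp wm a) := by
  unfold chi
  exact continuous_id.add (continuous_const.mul
    (continuous_finset_sum _ (fun m _ => hh_cont.sub continuous_const)))

lemma chi_surj (c b D pbar : U → ℝ) (wp wm a : ℝ)
    (hc : ∀ m, 0 < c m) (ha : 0 < a) : Function.Surjective (chi c b D pbar wp wm a) := by
  have hmono : ∀ {s t : ℝ}, s ≤ t →
      ∑ m, (hh (c m) (b m) (D m) (pbar m) wp wm a s - D m)
        ≤ ∑ m, (hh (c m) (b m) (D m) (pbar m) wp wm a t - D m) := by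
    intro s t hst
    exact Finset.sum_le_sum (fun m _ => by
      have := hh_mono (cc := c m) (bb := b m) (DD := D m) (pb := pbar m)
        (wp := wp) (wm := wm) (aa := a) ha (hc m) hst
      linarith)
  set C : ℝ := a * ∑ m, (hh (c m) (b m) (D m) (pbar m) wp wm a 0 - D m) with hC
  apply Continuous.surjective (chi_cont c b D pbar wp wm a)
  · apply Filter.tendsto_atTop_mono' _ _ (Filter.tendsto_atTop_add_const_right _ C Filter.tendsto_id)
    filter_upwards [Filter.eventually_ge_atTop (0:ℝ)] with s hs
    have := hmono hs
    unfold chi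
    simp only [id]
    nlinarith [mul_le_mul_of_nonneg_left (hmono hs) ha.le]
  · apply Filter.tendsto_atBot_mono' _ _ (Filter.tendsto_atBot_add_const_right _ C Filter.tendsto_id)
    filter_upwards [Filter.eventually_le_atBot (0:ℝ)] with s hs
    unfold chi
    simp only [id]
    nlinarith [mul_le_mul_of_nonneg_left (hmono hs) ha.le]

end LESM

/-- the aggregate maps `w⁰ ↦ X(w⁰)` and `w⁰ ↦ P(w⁰)` are
continuous and piecewise affine: there are finitely many breakpoints
`t 0 < t 1 < ⋯ < t (k-1)` such that on each of the `k+1` closed intervals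
they determine, both maps agree with an affine function. -/
theorem lesm_aggregates_piecewise_affine [Nonempty U]
    (c b D pbar : U → ℝ) (wplus wminus a : ℝ)
    (hc : ∀ m, 0 < c m) (hpbar : ∀ m, 0 ≤ pbar m)
    (hb : ∀ m, 0 < b m) (hbw : ∀ m, b m < wminus)
    (hw : wminus < wplus) (ha : 0 < a)
    (pstar ppstar pmstar xstar : ℝ → U → ℝ)
    (hopt : ∀ w0 : ℝ, IsOptimal c b D pbar wplus wminus a w0
      (pstar w0) (ppstar w0) (pmstar w0) (xstar w0))
    (X P : ℝ → ℝ)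
    (hX : X = fun w0 => ∑ m : U, xstar w0 m)
    (hP : P = fun w0 => ∑ m : U, (xstar w0 m + pmstar w0 m - ppstar w0 m)) :
    Continuous X ∧ Continuous P ∧
    ∃ (k : ℕ) (t : Fin k → ℝ), StrictMono t ∧
      ∃ cX dX cP dP : Fin (k + 1) → ℝ,
        ∀ (i : Fin (k + 1)) (w : ℝ),
          (∀ j : Fin k, (j : ℕ) < (i : ℕ) → t j ≤ w) →
          (∀ j : Fin k, (i : ℕ) ≤ (j : ℕ) → w ≤ t j) →
          X w = cX i * w + dX i ∧ P w = cP i * w + dP i := by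
  classical
  -- the order isomorphism induced by chi, and its inverse sigma
  have hmono := LESM.chi_strictMono c b D pbar wplus wminus a hc ha
  have hsurj := LESM.chi_surj c b D pbar wplus wminus a hc ha
  set e : ℝ ≃o ℝ := StrictMono.orderIsoOfSurjective _ hmono hsurj with he
  set σ : ℝ → ℝ := fun w => e.symm w with hσ
  have hcoe : ∀ s, e s = LESM.chi c b D pbar wplus wminus a s := fun s => by
    rw [he]; rfl
  have hχσ : ∀ w, LESM.chi c b D pbar wplus wminus a (σ w) = w := fun w => by
    rw [← hcoe]; exact e.apply_symm_apply w
  have hσχ : ∀ s, σ (LESM.chi c b D pbar wplus wminus a s) = s := fun s => by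
    rw [hσ, ← hcoe]; exact e.symm_apply_apply s
  have hσmono : Monotone σ := fun u v huv => e.symm.monotone huv
  have hσcont : Continuous σ := by
    rw [hσ]
    exact OrderIso.continuous e.symm
  -- identification of the optimizer with the explicit candidate
  have hid : ∀ w m, pstar w m = LESM.phat (c m) (b m) (D m) (pbar m) wplus wminus a (σ w) ∧
      xstar w m = LESM.hh (c m) (b m) (D m) (pbar m) wplus wminus a (σ w) - D m := by
    intro w
    refine LESM.star_eq c b D pbar wplus wminus a hc hpbar hbw hw ha w (σ w) ?_
      (pstar w) (ppstar w) (pmstar w) (xstar w) (hopt w)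
    have := hχσ w
    unfold LESM.chi at this
    linarith
  -- closed forms for X and P
  have hXeq : ∀ w, X w = ∑ m, (LESM.hh (c m) (b m) (D m) (pbar m) wplus wminus a (σ w) - D m) := by
    intro w
    rw [hX]
    exact Finset.sum_congr rfl (fun m _ => (hid w m).2)
  have hPeq : ∀ w, P w = ∑ m, (LESM.phat (c m) (b m) (D m) (pbar m) wplus wminus a (σ w) - D m) := by
    intro w
    rw [hP]
    refine Finset.sum_congr rfl (fun m _ => ?_)
    have hb1 := ((hopt w).1 m).1
    have := (hid w m).1
    linarith [(hid w m).2]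
  have hXcont : Continuous X := by
    have : Continuous fun w => ∑ m, (LESM.hh (c m) (b m) (D m) (pbar m) wplus wminus a (σ w) - D m) :=
      continuous_finset_sum _ (fun m _ => (LESM.hh_cont.comp hσcont).sub continuous_const)
    exact this.congr (fun w => (hXeq w).symm)
  have hPcont : Continuous P := by
    have : Continuous fun w => ∑ m, (LESM.phat (c m) (b m) (D m) (pbar m) wplus wminus a (σ w) - D m) :=
      continuous_finset_sum _ (fun m _ => (LESM.phat_cont.comp hσcont).sub continuous_const)
    exact this.congr (fun w => (hPeq w).symm)
  refine ⟨hXcont, hPcont, ?_⟩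
  -- breakpoints
  set S : Finset ℝ :=
    Finset.univ.biUnion (fun m => LESM.rootSet (c m) (b m) (D m) (pbar m) wplus wminus a) with hS
  set k := S.card with hk
  set u : Fin k → ℝ := fun j => ((S.orderIsoOfFin rfl) j : ℝ) with hu
  have humono : StrictMono u := by
    intro i j hij
    exact Subtype.coe_lt_coe.mpr ((S.orderIsoOfFin rfl).strictMono hij)
  refine ⟨k, fun j => LESM.chi c b D pbar wplus wminus a (u j), hmono.comp humono, ?_⟩
  have key : ∀ i : Fin (k+1), ∃ α β α' β' : ℝ, ∀ w : ℝ,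
      (∀ j : Fin k, (j : ℕ) < (i : ℕ) → LESM.chi c b D pbar wplus wminus a (u j) ≤ w) →
      (∀ j : Fin k, (i : ℕ) ≤ (j : ℕ) → w ≤ LESM.chi c b D pbar wplus wminus a (u j)) →
      X w = α * w + β ∧ P w = α' * w + β' := by
    intro i
    set R : Set ℝ := {s | ∀ j : Fin k, ((j : ℕ) < (i : ℕ) → u j ≤ s) ∧
        ((i : ℕ) ≤ (j : ℕ) → s ≤ u j)} with hR
    have hside : ∀ r ∈ S, LESM.SameSide R r := by
      intro r hr s hs s' hs'
      obtain ⟨j, hj⟩ := (S.orderIsoOfFin rfl).surjective ⟨r, hr⟩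
      have hju : u j = r := by simp only [hu]; rw [hj]
      rcases lt_or_ge (j : ℕ) (i : ℕ) with hcase | hcase
      · have h1 := (hs j).1 hcase
        have h2 := (hs' j).1 hcase
        rw [hju] at h1 h2
        exact mul_nonneg (by linarith) (by linarith)
      · have h1 := (hs j).2 hcase
        have h2 := (hs' j).2 hcase
        rw [hju] at h1 h2
        nlinarith
    have haff := fun m : U => LESM.aff_pieces (cc := c m) (bb := b m) (DD := D m)
      (pb := pbar m) (wp := wplus) (wm := wminus) (aa := a)
      (hc m) (hbw m) hw ha (hpbar m) (R := R)
      (fun r hr => hside r (Finset.mem_biUnion.mpr ⟨m, Finset.mem_univ m, hr⟩))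
    choose αh βh αp βp hα hhEq hpEq using haff
    set Sα := ∑ m, αh m with hSα
    set ρ := 1 + a * Sα with hρdef
    set κ := a * ∑ m, (βh m - D m) with hκ
    have hSαpos : 0 ≤ Sα := Finset.sum_nonneg (fun m _ => hα m)
    have hρpos : 0 < ρ := by rw [hρdef]; nlinarith
    have hchiR : ∀ s ∈ R, LESM.chi c b D pbar wplus wminus a s = ρ * s + κ := by
      intro s hs
      unfold LESM.chi
      have h1 : ∑ m, (LESM.hh (c m) (b m) (D m) (pbar m) wplus wminus a s - D m)
          = Sα * s + ∑ m, (βh m - D m) := by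
        rw [hSα, Finset.sum_mul, ← Finset.sum_add_distrib]
        exact Finset.sum_congr rfl (fun m _ => by rw [hhEq m s hs]; ring)
      rw [h1, hρdef, hκ]
      ring
    refine ⟨Sα/ρ, (∑ m, (βh m - D m)) - Sα*κ/ρ,
      (∑ m, αp m)/ρ, (∑ m, (βp m - D m)) - (∑ m, αp m)*κ/ρ, ?_⟩
    intro w hw1 hw2
    have hσR : σ w ∈ R := by
      intro j
      constructor
      · intro hj
        have := hw1 j hj
        have h2 : σ (LESM.chi c b D pbar wplus wminus a (u j)) ≤ σ w := hσmono this
        rwa [hσχ] at h2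
      · intro hj
        have := hw2 j hj
        have h2 : σ w ≤ σ (LESM.chi c b D pbar wplus wminus a (u j)) := hσmono this
        rwa [hσχ] at h2
    have hw3 : ρ * σ w + κ = w := by rw [← hchiR (σ w) hσR]; exact hχσ w
    have hσw : σ w = (w - κ)/ρ := by field_simp; linarith
    constructor
    · rw [hXeq w]
      have h1 : ∑ m, (LESM.hh (c m) (b m) (D m) (pbar m) wplus wminus a (σ w) - D m)
          = Sα * σ w + ∑ m, (βh m - D m) := by
        rw [hSα, Finset.sum_mul, ← Finset.sum_add_distrib]
        exact Finset.sum_congr rfl (fun m _ => by rw [hhEq m (σ w) hσR]; ring)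
      rw [h1, hσw]
      field_simp
      ring
    · rw [hPeq w]
      have h1 : ∑ m, (LESM.phat (c m) (b m) (D m) (pbar m) wplus wminus a (σ w) - D m)
          = (∑ m, αp m) * σ w + ∑ m, (βp m - D m) := by
        rw [Finset.sum_mul, ← Finset.sum_add_distrib]
        exact Finset.sum_congr rfl (fun m _ => by rw [hpEq m (σ w) hσR]; ring)
      rw [h1, hσw]
      field_simp
      ring
  choose cX dX cP dP hfin using key
  exact ⟨cX, dX, cP, dP, fun i w h1 h2 => hfin i w h1 h2⟩
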